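/- arXiv:2107.06040 — 2 statements merged into one kernel-verified Lean document; each statement's English description precedes it below -/
import Mathlib

section
/- There exists y₀ > 0 such that for all 0 < y < y₀, √(log(1/y²) + 1) - 1 ≤ Φ⁻¹(1 - y) ≤ √(log(1/y²)). -/
noncomputable def stdNormalPDF (u : ℝ) : ℝ :=
  (Real.sqrt (2 * Real.pi))⁻¹ * Real.exp (-u ^ 2 / 2)

noncomputable def stdNormalCDF (x : ℝ) : ℝ :=
  ∫ u in Set.Iic x, stdNormalPDF u

open MeasureTheory Set Filter

lemma stdNormalPDF_eq : stdNormalPDF = ProbabilityTheory.gaussianPDFReal 0 1 := by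
  funext x
  simp [stdNormalPDF, ProbabilityTheory.gaussianPDFReal, sq]


lemma stdNormalPDF_pos (u : ℝ) : 0 < stdNormalPDF u := by
  have : 0 < Real.sqrt (2 * Real.pi) := Real.sqrt_pos.2 (by positivity)
  exact mul_pos (inv_pos.2 this) (Real.exp_pos _)

lemma stdNormalPDF_cont : Continuous stdNormalPDF := by
  unfold stdNormalPDF; continuity

lemma stdNormalPDF_integrable : Integrable stdNormalPDF := by
  rw [stdNormalPDF_eq]; exact ProbabilityTheory.integrable_gaussianPDFReal 0 1

lemma stdNormalPDF_integral : ∫ u, stdNormalPDF u = 1 := by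
  rw [stdNormalPDF_eq]; exact ProbabilityTheory.integral_gaussianPDFReal_eq_one 0 one_ne_zero

lemma stdNormalCDF_strictMono : StrictMono stdNormalCDF := by
  intro a b hab
  have h1 : stdNormalCDF b - stdNormalCDF a = ∫ u in a..b, stdNormalPDF u := by
    exact intervalIntegral.integral_Iic_sub_Iic (stdNormalPDF_integrable.integrableOn)
      (stdNormalPDF_integrable.integrableOn)
  have h2 : 0 < ∫ u in a..b, stdNormalPDF u :=
    intervalIntegral.intervalIntegral_pos_of_pos
      (stdNormalPDF_integrable.intervalIntegrable) stdNormalPDF_pos hab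
  linarith

lemma stdNormalCDF_add_tail (x : ℝ) :
    stdNormalCDF x + ∫ u in Set.Ioi x, stdNormalPDF u = 1 := by
  rw [stdNormalCDF, intervalIntegral.integral_Iic_add_Ioi
    stdNormalPDF_integrable.integrableOn stdNormalPDF_integrable.integrableOn,
    stdNormalPDF_integral]

lemma sqrt_two_pi_ge_one : 1 ≤ Real.sqrt (2 * Real.pi) := by
  rw [show (1:ℝ) = Real.sqrt 1 by simp]
  exact Real.sqrt_le_sqrt (by nlinarith [Real.pi_gt_three])

lemma tail_deriv (B : ℝ) :
    (∀ u ∈ Set.Ici B, HasDerivAt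
      (fun u : ℝ => -((Real.sqrt (2 * Real.pi))⁻¹ * Real.exp (-u ^ 2 / 2)))
      (u * stdNormalPDF u) u) ∧
    Filter.Tendsto (fun u : ℝ => -((Real.sqrt (2 * Real.pi))⁻¹ * Real.exp (-u ^ 2 / 2)))
      Filter.atTop (nhds 0) := by
  constructor
  · intro u _
    have h1 : HasDerivAt (fun u : ℝ => -u ^ 2 / 2) (-u) u := by
      exact ((hasDerivAt_pow 2 u).neg.div_const 2).congr_deriv (by norm_num; ring)
    have h2 := (h1.exp.const_mul ((Real.sqrt (2 * Real.pi))⁻¹)).neg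
    exact h2.congr_deriv (by unfold stdNormalPDF; ring)
  · have h3 : Filter.Tendsto (fun u : ℝ => -u ^ 2 / 2) Filter.atTop Filter.atBot := by
      apply Filter.Tendsto.atBot_div_const (by norm_num : (0:ℝ) < 2)
      exact tendsto_neg_atTop_atBot.comp (tendsto_pow_atTop two_ne_zero)
    have h4 := (Real.tendsto_exp_atBot.comp h3).const_mul ((Real.sqrt (2 * Real.pi))⁻¹)
    simpa using h4.neg

lemma tail_le (B : ℝ) (hB : 1 ≤ B) :
    ∫ u in Set.Ioi B, stdNormalPDF u ≤ Real.exp (-B ^ 2 / 2) := by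
  obtain ⟨hderiv, htend⟩ := tail_deriv B
  have g'pos : ∀ u ∈ Set.Ioi B, 0 ≤ u * stdNormalPDF u := fun u hu =>
    mul_nonneg (by have := hu.out; linarith) (stdNormalPDF_pos u).le
  have hint : MeasureTheory.IntegrableOn (fun u => u * stdNormalPDF u) (Set.Ioi B) :=
    MeasureTheory.integrableOn_Ioi_deriv_of_nonneg' hderiv g'pos htend
  have hval : ∫ u in Set.Ioi B, u * stdNormalPDF u
      = (Real.sqrt (2 * Real.pi))⁻¹ * Real.exp (-B ^ 2 / 2) := by
    rw [MeasureTheory.integral_Ioi_of_hasDerivAt_of_nonneg' hderiv g'pos htend]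
    ring
  have hmono : ∫ u in Set.Ioi B, stdNormalPDF u ≤ ∫ u in Set.Ioi B, u * stdNormalPDF u := by
    apply MeasureTheory.setIntegral_mono_on stdNormalPDF_integrable.integrableOn hint
      measurableSet_Ioi
    intro x hx
    have hx1 : 1 ≤ x := le_trans hB hx.out.le
    nlinarith [stdNormalPDF_pos x]
  have hc : (Real.sqrt (2 * Real.pi))⁻¹ ≤ 1 := by
    rw [inv_le_one_iff₀]; right; exact sqrt_two_pi_ge_one
  calc ∫ u in Set.Ioi B, stdNormalPDF u ≤ _ := hmono
    _ = (Real.sqrt (2 * Real.pi))⁻¹ * Real.exp (-B ^ 2 / 2) := hval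
    _ ≤ 1 * Real.exp (-B ^ 2 / 2) := by
        apply mul_le_mul_of_nonneg_right hc (Real.exp_pos _).le
    _ = _ := one_mul _

lemma tail_ge (A : ℝ) (hA : 0 ≤ A) :
    (1 / 2) * stdNormalPDF (A + 1 / 2) ≤ ∫ u in Set.Ioi A, stdNormalPDF u := by
  have h1 : ∫ u in Set.Ioc A (A + 1 / 2), stdNormalPDF u ≤ ∫ u in Set.Ioi A, stdNormalPDF u := by
    apply MeasureTheory.setIntegral_mono_set stdNormalPDF_integrable.integrableOn
      (Filter.Eventually.of_forall fun x => (stdNormalPDF_pos x).le)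
      (Filter.Eventually.of_forall (fun x hx => hx.1))
  have hvol : volume (Set.Ioc A (A + 1 / 2)) = ENNReal.ofReal (1 / 2) := by
    rw [Real.volume_Ioc]; norm_num
  have h2 : stdNormalPDF (A + 1 / 2) * (volume (Set.Ioc A (A + 1 / 2))).toReal
      ≤ ∫ u in Set.Ioc A (A + 1 / 2), stdNormalPDF u := by
    apply MeasureTheory.setIntegral_ge_of_const_le_real measurableSet_Ioc
      (by rw [hvol]; exact ENNReal.ofReal_ne_top)
    · intro x hx
      unfold stdNormalPDF
      apply mul_le_mul_of_nonneg_left _ (by positivity)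
      apply Real.exp_le_exp.2
      have h3 : x ≤ A + 1 / 2 := hx.2
      have h4 : 0 ≤ x := le_trans hA hx.1.le
      nlinarith
    · exact stdNormalPDF_integrable.integrableOn
  rw [hvol, ENNReal.toReal_ofReal (by norm_num)] at h2
  calc (1 / 2 : ℝ) * stdNormalPDF (A + 1 / 2) = stdNormalPDF (A + 1 / 2) * (1 / 2) := by ring
    _ ≤ _ := h2
    _ ≤ _ := h1

theorem stmt_6 (Phiinv : ℝ → ℝ)
    (hleft : ∀ x : ℝ, Phiinv (stdNormalCDF x) = x)
    (hright : ∀ y ∈ Set.Ioo (0 : ℝ) 1, stdNormalCDF (Phiinv y) = y) :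
    ∃ y₀ > (0 : ℝ), ∀ y : ℝ, 0 < y → y < y₀ →
      Real.sqrt (Real.log (1 / y ^ 2) + 1) - 1 ≤ Phiinv (1 - y) ∧
      Phiinv (1 - y) ≤ Real.sqrt (Real.log (1 / y ^ 2)) := by
  refine ⟨Real.exp (-40), Real.exp_pos _, fun y hy0 hy40 => ?_⟩
  have hy1 : y < 1 := lt_trans hy40 (Real.exp_lt_one_iff.2 (by norm_num))
  have hlogy : Real.log y < -40 := (Real.log_lt_iff_lt_exp hy0).2 hy40
  set L := Real.log (1 / y ^ 2) with hL
  have hLval : L = -2 * Real.log y := by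
    rw [hL, one_div, Real.log_inv, Real.log_pow]; push_cast; ring
  have hL80 : 80 < L := by rw [hLval]; linarith
  have hmem : (1 - y) ∈ Set.Ioo (0 : ℝ) 1 := ⟨by linarith, by linarith⟩
  have hP := hright _ hmem
  set P := Phiinv (1 - y) with hPdef
  -- upper bound
  set B := Real.sqrt L with hB
  have hB1 : 1 ≤ B := by
    rw [hB, Real.le_sqrt (by norm_num) (by linarith)]; linarith
  have hBsq : B ^ 2 = L := Real.sq_sqrt (by linarith)
  have hyB : Real.exp (-B ^ 2 / 2) = y := by
    rw [hBsq, hLval, show -(-2 * Real.log y) / 2 = Real.log y by ring, Real.exp_log hy0]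
  have hQB : ∫ u in Set.Ioi B, stdNormalPDF u ≤ y := by rw [← hyB]; exact tail_le B hB1
  have hCB : 1 - y ≤ stdNormalCDF B := by have := stdNormalCDF_add_tail B; linarith
  have hPB : P ≤ B := by
    by_contra h
    push_neg at h
    have h2 := stdNormalCDF_strictMono h
    rw [hP] at h2
    linarith
  -- lower bound
  set A := Real.sqrt (L + 1) - 1 with hA
  have hA1 : A + 1 = Real.sqrt (L + 1) := by rw [hA]; ring
  have hA8 : 8 ≤ A := by
    have h9 : (9 : ℝ) ≤ Real.sqrt (L + 1) := by
      rw [Real.le_sqrt (by norm_num) (by linarith)]; linarith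
    rw [← hA1] at h9; linarith
  have hAsq : (A + 1) ^ 2 = L + 1 := by rw [hA1]; exact Real.sq_sqrt (by linarith)
  have hsqrt2pi : Real.sqrt (2 * Real.pi) ≤ 3 := by
    rw [show (3 : ℝ) = Real.sqrt 9 by
      rw [show (9 : ℝ) = 3 ^ 2 by norm_num, Real.sqrt_sq (by norm_num)]]
    exact Real.sqrt_le_sqrt (by nlinarith [Real.pi_lt_d2])
  have hexp3 : Real.exp (-3 : ℝ) ≤ 1 / 19 := by
    rw [Real.exp_neg]
    have h1 : (19 : ℝ) ≤ Real.exp 3 := by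
      have h2 : Real.exp 1 ^ (3 : ℕ) = Real.exp 3 := by
        rw [← Real.exp_nat_mul]; norm_num
      have h3 : (2.7182818283 : ℝ) ^ (3 : ℕ) ≤ Real.exp 1 ^ (3 : ℕ) :=
        pow_le_pow_left₀ (by norm_num) Real.exp_one_gt_d9.le 3
      rw [h2] at h3
      nlinarith [h3]
    rw [inv_le_comm₀ (Real.exp_pos _) (by norm_num)] at *
    · linarith
  have hfac : Real.exp ((1 : ℝ) / 8 - A / 2) ≤ 1 / 2 * (Real.sqrt (2 * Real.pi))⁻¹ := by
    have h3 : Real.exp ((1 : ℝ) / 8 - A / 2) ≤ Real.exp (-3 : ℝ) :=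
      Real.exp_le_exp.2 (by linarith)
    have h5 : (1 / 3 : ℝ) ≤ (Real.sqrt (2 * Real.pi))⁻¹ := by
      rw [show (1 / 3 : ℝ) = (3 : ℝ)⁻¹ by norm_num]
      exact inv_anti₀ (Real.sqrt_pos.2 (by positivity)) hsqrt2pi
    linarith
  have hQA : y ≤ ∫ u in Set.Ioi A, stdNormalPDF u := by
    have h1 := tail_ge A (by linarith)
    have hyA : y = Real.exp (1 / 2 - (A + 1) ^ 2 / 2) := by
      rw [hAsq, hLval, show (1 : ℝ) / 2 - (-2 * Real.log y + 1) / 2 = Real.log y by ring,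
        Real.exp_log hy0]
    have h2 : y ≤ 1 / 2 * stdNormalPDF (A + 1 / 2) := by
      rw [hyA]
      have hsplit : Real.exp (1 / 2 - (A + 1) ^ 2 / 2)
          = Real.exp ((1 : ℝ) / 8 - A / 2) * Real.exp (-(A + 1 / 2) ^ 2 / 2) := by
        rw [← Real.exp_add]; congr 1; ring
      rw [hsplit]
      calc Real.exp ((1 : ℝ) / 8 - A / 2) * Real.exp (-(A + 1 / 2) ^ 2 / 2)
          ≤ 1 / 2 * (Real.sqrt (2 * Real.pi))⁻¹ * Real.exp (-(A + 1 / 2) ^ 2 / 2) :=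
            mul_le_mul_of_nonneg_right hfac (Real.exp_pos _).le
        _ = 1 / 2 * stdNormalPDF (A + 1 / 2) := by unfold stdNormalPDF; ring
    linarith
  have hCA : stdNormalCDF A ≤ 1 - y := by have := stdNormalCDF_add_tail A; linarith
  have hAP : A ≤ P := by
    by_contra h
    push_neg at h
    have h2 := stdNormalCDF_strictMono h
    rw [hP] at h2
    linarith
  exact ⟨hAP, hPB⟩
end

section
/- If (X,Y) is bivariate standard normal with correlation ρ, |ρ| ≤ δ < 1, then as c → ∞, P(X > c, Y > c) is asymptotically equivalent to (1+ρ)^{3/2} (2π√(1-ρ) c²)^{-1} exp(-c²/(1+ρ)); in particular P(X > c, Y > c) = o(exp(-c²/(1+δ') )) for any δ' > δ. -/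
set_option maxHeartbeats 1000000

open MeasureTheory Filter
open Set Topology

lemma shift1 (g : ℝ → ℝ) (c : ℝ) :
    ∫ x in Ioi c, g x = ∫ x in Ioi (0:ℝ), g (x + c) := by
  rw [← integral_indicator measurableSet_Ioi, ← integral_indicator measurableSet_Ioi,
    ← integral_add_right_eq_self (Set.indicator (Ioi c) g) c]
  congr 1 with x
  by_cases h : 0 < x
  · rw [Set.indicator_of_mem (by simpa using (by linarith : c < x + c) : x + c ∈ Ioi c),
      Set.indicator_of_mem (by simpa using h)]
  · rw [Set.indicator_of_notMem (by simp; linarith : x + c ∉ Ioi c),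
      Set.indicator_of_notMem (by simpa using h)]

lemma sub1 (g : ℝ → ℝ) {c : ℝ} (hc : 0 < c) :
    ∫ x in Ioi c, g x = c⁻¹ * ∫ t in Ioi (0:ℝ), g (c⁻¹ * t + c) := by
  rw [shift1 g c]
  have h := integral_comp_mul_left_Ioi (fun x => g (x + c)) 0 (inv_pos.2 hc)
  simp only [mul_zero, inv_inv, smul_eq_mul] at h
  rw [h]
  field_simp

theorem stmt_15 {Ω : Type*} [MeasureSpace Ω] [IsProbabilityMeasure (volume : Measure Ω)]
    (X Y : Ω → ℝ) (ρ δ : ℝ) (hρδ : |ρ| ≤ δ) (hδ : δ < 1)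
    (f : ℝ → ℝ → ℝ)
    (hf : ∀ x y, f x y = (2 * Real.pi * Real.sqrt (1 - ρ ^ 2))⁻¹ *
      Real.exp (-(x ^ 2 - 2 * ρ * x * y + y ^ 2) / (2 * (1 - ρ ^ 2))))
    (hJoint : ∀ s : Set (ℝ × ℝ), MeasurableSet s →
      ((volume : Measure Ω) {ω | (X ω, Y ω) ∈ s}).toReal = ∫ z in s, f z.1 z.2) :
    Tendsto (fun c : ℝ =>
        ((volume : Measure Ω) {ω | X ω > c ∧ Y ω > c}).toReal /
          ((1 + ρ) ^ ((3 : ℝ) / 2) *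
            (2 * Real.pi * Real.sqrt (1 - ρ) * c ^ 2)⁻¹ *
            Real.exp (-c ^ 2 / (1 + ρ))))
      atTop (nhds 1) ∧
    ∀ δ' : ℝ, δ < δ' →
      Tendsto (fun c : ℝ =>
          ((volume : Measure Ω) {ω | X ω > c ∧ Y ω > c}).toReal /
            Real.exp (-c ^ 2 / (1 + δ')))
        atTop (nhds 0) := by
  -- basic positivity facts
  have hδ0 : 0 ≤ δ := le_trans (abs_nonneg ρ) hρδ
  have hρ1 : ρ < 1 := lt_of_le_of_lt (le_trans (le_abs_self ρ) hρδ) hδ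
  have hρ2 : -1 < ρ := by have := (abs_le.1 hρδ).1; linarith
  have h1p : 0 < 1 + ρ := by linarith
  have h1m : 0 < 1 - ρ := by linarith
  have hr2 : 0 < 1 - ρ ^ 2 := by nlinarith
  have hpi : 0 < Real.pi := Real.pi_pos
  set K : ℝ := (2 * Real.pi * Real.sqrt (1 - ρ ^ 2))⁻¹ with hK_def
  have hK : 0 < K := by
    have := Real.sqrt_pos.2 hr2
    positivity
  -- quadratic form bounds
  have hQ0 : ∀ s t : ℝ, 0 ≤ s ^ 2 - 2 * ρ * s * t + t ^ 2 := by
    intro s t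
    nlinarith [mul_nonneg h1p.le (sq_nonneg (s - t)), mul_nonneg h1m.le (sq_nonneg (s + t))]
  have hQδ : ∀ s t : ℝ, (1 - δ) * (s ^ 2 + t ^ 2) ≤ s ^ 2 - 2 * ρ * s * t + t ^ 2 := by
    intro s t
    have h1 : 0 ≤ δ - ρ := by have := (abs_le.1 hρδ).2; linarith
    have h2 : 0 ≤ δ + ρ := by have := (abs_le.1 hρδ).1; linarith
    nlinarith [mul_nonneg h1 (sq_nonneg (s + t)), mul_nonneg h2 (sq_nonneg (s - t))]
  -- f is continuous and integrable
  have hfc : Continuous fun z : ℝ × ℝ => f z.1 z.2 := by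
    simp only [hf]; fun_prop
  have hD : (0:ℝ) < 2 * (1 - ρ ^ 2) := by positivity
  have hα : 0 < (1 - δ) / (2 * (1 - ρ ^ 2)) := div_pos (by linarith) hD
  set α : ℝ := (1 - δ) / (2 * (1 - ρ ^ 2)) with hα_def
  have hIntf : Integrable (fun z : ℝ × ℝ => f z.1 z.2) := by
    have hg : Integrable (fun z : ℝ × ℝ => K * (Real.exp (-α * z.1 ^ 2) * Real.exp (-α * z.2 ^ 2))) := by
      rw [Measure.volume_eq_prod]
      exact ((integrable_exp_neg_mul_sq hα).mul_prod (integrable_exp_neg_mul_sq hα)).const_mul K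
    refine hg.mono hfc.aestronglyMeasurable (Filter.Eventually.of_forall fun z => ?_)
    rw [hf]
    have hb : Real.exp (-(z.1 ^ 2 - 2 * ρ * z.1 * z.2 + z.2 ^ 2) / (2 * (1 - ρ ^ 2)))
        ≤ Real.exp (-α * z.1 ^ 2) * Real.exp (-α * z.2 ^ 2) := by
      rw [← Real.exp_add, Real.exp_le_exp, hα_def, div_le_iff₀ hD]
      have h := hQδ z.1 z.2
      field_simp
      nlinarith [h]
    rw [Real.norm_eq_abs, Real.norm_eq_abs, abs_of_pos (by positivity), abs_of_pos (by positivity)]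
    exact mul_le_mul_of_nonneg_left hb hK.le
  -- the rescaled integrand
  set G : ℝ → ℝ × ℝ → ℝ := fun c z => Real.exp (-(z.1 + z.2) / (1 + ρ) -
    (z.1 ^ 2 - 2 * ρ * z.1 * z.2 + z.2 ^ 2) / (2 * (1 - ρ ^ 2) * c ^ 2)) with hG_def
  set I : ℝ → ℝ := fun c => ∫ z in Ioi (0:ℝ) ×ˢ Ioi (0:ℝ), G c z with hI_def
  set S : ℝ → ℝ := fun c => K * Real.exp (-c ^ 2 / (1 + ρ)) * c⁻¹ * c⁻¹ with hS_def
  -- dominating function for G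
  set bound : ℝ × ℝ → ℝ := fun z => Real.exp (-(1 + ρ)⁻¹ * z.1) * Real.exp (-(1 + ρ)⁻¹ * z.2)
    with hbound_def
  have hGle : ∀ c : ℝ, ∀ z : ℝ × ℝ, G c z ≤ bound z := by
    intro c z
    have h1 : G c z ≤ Real.exp (-(z.1 + z.2) / (1 + ρ)) := by
      rw [hG_def, Real.exp_le_exp]
      have : 0 ≤ (z.1 ^ 2 - 2 * ρ * z.1 * z.2 + z.2 ^ 2) / (2 * (1 - ρ ^ 2) * c ^ 2) :=
        div_nonneg (hQ0 z.1 z.2) (by positivity)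
      linarith
    have h2 : Real.exp (-(z.1 + z.2) / (1 + ρ)) = bound z := by
      simp only [hbound_def, ← Real.exp_add]
      congr 1
      field_simp
      ring
    linarith [h2 ▸ h1]
  have hGpos : ∀ c : ℝ, ∀ z : ℝ × ℝ, 0 < G c z := fun c z => Real.exp_pos _
  have hGcont : ∀ c : ℝ, Continuous (G c) := by
    intro c; rw [hG_def]; fun_prop
  have hboundInt : IntegrableOn bound (Ioi (0:ℝ) ×ˢ Ioi (0:ℝ)) := by
    rw [IntegrableOn, Measure.volume_eq_prod, ← Measure.prod_restrict]
    exact (exp_neg_integrableOn_Ioi 0 (by positivity : (0:ℝ) < (1 + ρ)⁻¹)).mul_prod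
      (exp_neg_integrableOn_Ioi 0 (by positivity : (0:ℝ) < (1 + ρ)⁻¹))
  have hIntG : ∀ c : ℝ, IntegrableOn (G c) (Ioi (0:ℝ) ×ˢ Ioi (0:ℝ)) := by
    intro c
    refine Integrable.mono hboundInt ((hGcont c).aestronglyMeasurable) (Filter.Eventually.of_forall fun z => ?_)
    rw [Real.norm_eq_abs, abs_of_pos (hGpos c z), Real.norm_eq_abs,
      abs_of_pos (by positivity : (0:ℝ) < bound z)]
    exact hGle c z
  -- key pointwise identity after change of variables
  have hkey : ∀ c : ℝ, 0 < c → ∀ s t : ℝ,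
      f (c⁻¹ * s + c) (c⁻¹ * t + c) = K * Real.exp (-c ^ 2 / (1 + ρ)) * G c (s, t) := by
    intro c hc s t
    have h1 : (1 + ρ) ≠ 0 := h1p.ne'
    have h2 : (1 - ρ ^ 2) ≠ 0 := hr2.ne'
    have h3 : c ≠ 0 := hc.ne'
    have hexp : -((c⁻¹ * s + c) ^ 2 - 2 * ρ * (c⁻¹ * s + c) * (c⁻¹ * t + c) +
          (c⁻¹ * t + c) ^ 2) / (2 * (1 - ρ ^ 2))
        = -c ^ 2 / (1 + ρ) + (-(s + t) / (1 + ρ) -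
            (s ^ 2 - 2 * ρ * s * t + t ^ 2) / (2 * (1 - ρ ^ 2) * c ^ 2)) := by
      field_simp
      ring
    simp only [hf, hG_def]
    rw [hexp, Real.exp_add]
    ring
  -- main formula
  have hPA : ∀ c : ℝ, 0 < c →
      ((volume : Measure Ω) {ω | X ω > c ∧ Y ω > c}).toReal = S c * I c := by
    intro c hc
    have hmeas : MeasurableSet (Ioi c ×ˢ Ioi c) := measurableSet_Ioi.prod measurableSet_Ioi
    have hset : {ω | (X ω, Y ω) ∈ Ioi c ×ˢ Ioi c} = {ω | X ω > c ∧ Y ω > c} := by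
      ext ω; simp [Set.mem_prod, Set.mem_Ioi]
    have h0 := hJoint _ hmeas
    rw [hset] at h0
    rw [h0]
    have hfi : IntegrableOn (fun z : ℝ × ℝ => f z.1 z.2) (Ioi c ×ˢ Ioi c) :=
      hIntf.integrableOn
    calc ∫ z in Ioi c ×ˢ Ioi c, f z.1 z.2
        = ∫ x in Ioi c, ∫ y in Ioi c, f x y := setIntegral_prod _ hfi
      _ = ∫ x in Ioi c, c⁻¹ * ∫ t in Ioi (0:ℝ), f x (c⁻¹ * t + c) :=
          integral_congr_ae (Filter.Eventually.of_forall fun x => sub1 (f x) hc)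
      _ = c⁻¹ * ∫ x in Ioi c, ∫ t in Ioi (0:ℝ), f x (c⁻¹ * t + c) := integral_const_mul _ _
      _ = c⁻¹ * (c⁻¹ * ∫ s in Ioi (0:ℝ), ∫ t in Ioi (0:ℝ), f (c⁻¹ * s + c) (c⁻¹ * t + c)) := by
          rw [sub1 (fun x => ∫ t in Ioi (0:ℝ), f x (c⁻¹ * t + c)) hc]
      _ = c⁻¹ * (c⁻¹ * (K * Real.exp (-c ^ 2 / (1 + ρ)) *
            ∫ s in Ioi (0:ℝ), ∫ t in Ioi (0:ℝ), G c (s, t))) := by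
          have hiter : ∫ s in Ioi (0:ℝ), ∫ t in Ioi (0:ℝ), f (c⁻¹ * s + c) (c⁻¹ * t + c)
              = K * Real.exp (-c ^ 2 / (1 + ρ)) * ∫ s in Ioi (0:ℝ), ∫ t in Ioi (0:ℝ), G c (s, t) := by
            rw [← integral_const_mul]
            refine integral_congr_ae (Filter.Eventually.of_forall fun s => ?_)
            dsimp only
            rw [← integral_const_mul]
            exact integral_congr_ae (Filter.Eventually.of_forall fun t => hkey c hc s t)
          rw [hiter]
      _ = S c * I c := by
          rw [hS_def, hI_def, ← setIntegral_prod _ (hIntG c), ← Measure.volume_eq_prod]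
          ring
  -- exp identity used for limits
  have hbe : ∀ z : ℝ × ℝ, Real.exp (-(z.1 + z.2) / (1 + ρ)) = bound z := by
    intro z
    simp only [hbound_def, ← Real.exp_add]
    congr 1
    field_simp
    ring
  -- value of the 1D exponential integral
  have hlim1 : ∫ x in Ioi (0:ℝ), Real.exp (-(1 + ρ)⁻¹ * x) = 1 + ρ := by
    have h := integral_comp_mul_left_Ioi (fun x => Real.exp (-x)) 0 (inv_pos.2 h1p)
    simp only [mul_zero, inv_inv, smul_eq_mul] at h
    simp only [neg_mul]
    rw [h, integral_exp_neg_Ioi_zero, mul_one]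
  -- integral of the dominating function
  have hboundval : ∫ z in Ioi (0:ℝ) ×ˢ Ioi (0:ℝ), bound z = (1 + ρ) ^ 2 := by
    simp only [hbound_def, Measure.volume_eq_prod]
    rw [setIntegral_prod_mul (fun x : ℝ => Real.exp (-(1 + ρ)⁻¹ * x))
      (fun x : ℝ => Real.exp (-(1 + ρ)⁻¹ * x)), hlim1]
    ring
  -- dominated convergence
  have hItend : Tendsto I atTop (𝓝 ((1 + ρ) ^ 2)) := by
    have hdct := tendsto_integral_filter_of_dominated_convergence
      (μ := volume.restrict (Ioi (0:ℝ) ×ˢ Ioi (0:ℝ))) (l := atTop)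
      (F := fun c => G c) (f := bound) bound
      (Filter.Eventually.of_forall fun c => (hGcont c).aestronglyMeasurable)
      (Filter.Eventually.of_forall fun c => Filter.Eventually.of_forall fun z => by
        rw [Real.norm_eq_abs, abs_of_pos (hGpos c z)]; exact hGle c z)
      hboundInt
      (Filter.Eventually.of_forall fun z => by
        have hq : Tendsto (fun c : ℝ => (z.1 ^ 2 - 2 * ρ * z.1 * z.2 + z.2 ^ 2) /
            (2 * (1 - ρ ^ 2) * c ^ 2)) atTop (𝓝 0) :=
          Tendsto.div_atTop tendsto_const_nhds
            (Tendsto.const_mul_atTop hD (tendsto_pow_atTop two_ne_zero))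
        have h1 : Tendsto (fun c : ℝ => -(z.1 + z.2) / (1 + ρ) -
            (z.1 ^ 2 - 2 * ρ * z.1 * z.2 + z.2 ^ 2) / (2 * (1 - ρ ^ 2) * c ^ 2)) atTop
            (𝓝 (-(z.1 + z.2) / (1 + ρ) - 0)) := tendsto_const_nhds.sub hq
        have h2 := (Real.continuous_exp.tendsto _).comp h1
        rw [sub_zero, hbe z] at h2
        exact h2)
    rwa [hboundval] at hdct
  -- comparison of S with the normalizing constant
  have hsqmul : Real.sqrt (1 - ρ ^ 2) = Real.sqrt (1 - ρ) * Real.sqrt (1 + ρ) := by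
    rw [show (1:ℝ) - ρ ^ 2 = (1 - ρ) * (1 + ρ) by ring, Real.sqrt_mul h1m.le]
  have h32 : (1 + ρ) ^ ((3:ℝ)/2) = (1 + ρ) ^ 2 / Real.sqrt (1 + ρ) := by
    rw [eq_div_iff (Real.sqrt_ne_zero'.2 h1p), Real.sqrt_eq_rpow, ← Real.rpow_add h1p,
      show (3:ℝ)/2 + 1/2 = 2 by norm_num, Real.rpow_two]
  have hA : ∀ c : ℝ, (1 + ρ) ^ ((3:ℝ)/2) * (2 * Real.pi * Real.sqrt (1 - ρ) * c ^ 2)⁻¹ *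
      Real.exp (-c ^ 2 / (1 + ρ)) = S c * (1 + ρ) ^ 2 := by
    intro c
    by_cases hc : c = 0
    · simp [hc, hS_def]
    · rw [hS_def, hK_def, hsqmul, h32]
      have e1 : Real.sqrt (1 - ρ) ≠ 0 := Real.sqrt_ne_zero'.2 h1m
      have e2 : Real.sqrt (1 + ρ) ≠ 0 := Real.sqrt_ne_zero'.2 h1p
      field_simp
  have hSpos : ∀ c : ℝ, 0 < c → 0 < S c := by
    intro c hc
    rw [hS_def]
    have := Real.exp_pos (-c ^ 2 / (1 + ρ))
    positivity
  constructor
  · -- first part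
    have heq : ∀ᶠ c : ℝ in atTop,
        I c / (1 + ρ) ^ 2 =
        ((volume : Measure Ω) {ω | X ω > c ∧ Y ω > c}).toReal /
          ((1 + ρ) ^ ((3:ℝ)/2) * (2 * Real.pi * Real.sqrt (1 - ρ) * c ^ 2)⁻¹ *
            Real.exp (-c ^ 2 / (1 + ρ))) := by
      filter_upwards [eventually_gt_atTop (0:ℝ)] with c hc
      rw [hPA c hc, hA c, mul_div_mul_left _ _ (hSpos c hc).ne']
    have hlim := hItend.div_const ((1 + ρ) ^ 2)
    rw [div_self (pow_ne_zero 2 h1p.ne')] at hlim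
    exact hlim.congr' heq
  · -- second part
    intro δ' hδ'
    have h1δ' : 0 < 1 + δ' := by linarith
    have hβ : (1 + δ')⁻¹ < (1 + ρ)⁻¹ := by
      apply inv_strictAnti₀ h1p
      have := (abs_le.1 hρδ).2
      linarith
    have hexp0 : Tendsto (fun c : ℝ => Real.exp (-c ^ 2 / (1 + ρ) + c ^ 2 / (1 + δ')))
        atTop (𝓝 0) := by
      have harg : Tendsto (fun c : ℝ => -c ^ 2 / (1 + ρ) + c ^ 2 / (1 + δ')) atTop atBot := by
        have heq2 : ∀ c : ℝ, -c ^ 2 / (1 + ρ) + c ^ 2 / (1 + δ')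
            = c ^ 2 * ((1 + δ')⁻¹ - (1 + ρ)⁻¹) := by
          intro c
          field_simp
          ring
        rw [funext heq2]
        exact Tendsto.atTop_mul_const_of_neg (by linarith) (tendsto_pow_atTop two_ne_zero)
      exact Real.tendsto_exp_atBot.comp harg
    have h1 : Tendsto (fun c : ℝ => c⁻¹ * c⁻¹) atTop (𝓝 0) := by
      have h := tendsto_inv_atTop_zero (𝕜 := ℝ)
      simpa using h.mul h
    have hzero : Tendsto (fun c : ℝ => K * (c⁻¹ * c⁻¹) * I c *
        Real.exp (-c ^ 2 / (1 + ρ) + c ^ 2 / (1 + δ'))) atTop (𝓝 0) := by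
      have := ((tendsto_const_nhds (x := K) (f := atTop)).mul h1).mul hItend |>.mul hexp0
      simpa using this
    refine Tendsto.congr' ?_ hzero
    filter_upwards [eventually_gt_atTop (0:ℝ)] with c hc
    rw [hPA c hc, hS_def, eq_div_iff (Real.exp_ne_zero _)]
    have hee : Real.exp (-c ^ 2 / (1 + ρ) + c ^ 2 / (1 + δ')) *
        Real.exp (-c ^ 2 / (1 + δ')) = Real.exp (-c ^ 2 / (1 + ρ)) := by
      rw [← Real.exp_add]
      congr 1
      ring
    linear_combination (K * (c⁻¹ * c⁻¹) * I c) * hee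
end
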